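/- On the circle 𝕋 = ℝ/ℤ, both u₁ and u₂ ≡ 0 are forward weak KAM solutions of u + (1/2)|u'|² = 0, where u₁ is the even 1-periodic extension of u(x) = -x²/2 from [0,1/2]; in particular the set of forward weak KAM solutions is not a singleton. -/

import Mathlib

open Set


/-- A forward weak KAM solution of `u + |u'|²/2 = 0` on the circle `𝕋 = ℝ/ℤ`,
modelled by 1-periodic functions on `ℝ`.  The Lagrangian is
`L(x,u,v) = v²/2 - u`. -/
def IsForwardWeakKAMCircle (u : ℝ → ℝ) : Prop :=
  Continuous u ∧ (∀ x : ℝ, u (x + 1) = u x) ∧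
  -- (i) domination along C¹ curves
  (∀ (γ : ℝ → ℝ) (t₁ t₂ : ℝ), t₁ < t₂ → ContDiffOn ℝ 1 γ (Icc t₁ t₂) →
    u (γ t₂) - u (γ t₁) ≤ ∫ s in t₁..t₂, ((deriv γ s) ^ 2 / 2 - u (γ s))) ∧
  -- (ii) forward calibrated curves from every point
  (∀ x : ℝ, ∃ γ : ℝ → ℝ, γ 0 = x ∧ ContDiff ℝ 1 γ ∧
    ∀ t > (0:ℝ), u (γ t) - u (γ 0) = ∫ s in (0:ℝ)..t, ((deriv γ s) ^ 2 / 2 - u (γ s)))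

noncomputable def Ufun : ℝ → ℝ := fun x => -(x - round x)^2/2

lemma round_nearest (x : ℝ) (k : ℤ) : |x - round x| ≤ |x - (k:ℝ)| := by
  by_cases h : k = round x
  · subst h; rfl
  · have h1 : (1:ℝ) ≤ |(k:ℝ) - (round x : ℝ)| := by
      rw [← Int.cast_sub]
      exact_mod_cast Int.one_le_abs (sub_ne_zero.mpr h)
    have h2 : |x - round x| ≤ 1/2 := abs_sub_round x
    have h3 : |(k:ℝ) - round x| ≤ |x - k| + |x - round x| := by
      calc |(k:ℝ) - round x| = |(x - round x) - (x - k)| := by ring_nf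
        _ ≤ |x - round x| + |x - k| := abs_sub _ _
        _ = |x - k| + |x - round x| := by ring
    linarith
lemma Ufun_lower (x : ℝ) (k : ℤ) : -(x - (k:ℝ))^2/2 ≤ Ufun x := by
  have := round_nearest x k
  have h2 : (x - round x)^2 ≤ (x - (k:ℝ))^2 := by
    rw [← sq_abs (x - (round x:ℝ)), ← sq_abs (x - (k:ℝ))]
    exact pow_le_pow_left₀ (abs_nonneg _) this 2
  unfold Ufun; linarith

lemma Ufun_lip (x y : ℝ) : Ufun x - Ufun y ≤ |x - y| * (1 + |x - y|) / 2 := by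
  have h1 : -(y - (round x : ℝ))^2/2 ≤ Ufun y := Ufun_lower y (round x)
  have h3 : Ufun x - Ufun y ≤ ((y - round x)^2 - (x - round x)^2)/2 := by
    unfold Ufun at *; linarith
  have h4 : |x - (round x:ℝ)| ≤ 1/2 := abs_sub_round x
  have h5 : (y - round x)^2 - (x - round x)^2 = (y - x) * ((y - round x) + (x - round x)) := by ring
  have h6 : (y - x) * ((y - round x) + (x - round x)) ≤ |x - y| * (1 + |x-y|) := by
    calc (y - x) * ((y - round x) + (x - round x)) ≤ |(y - x) * ((y - round x) + (x - round x))| := le_abs_self _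
      _ = |y - x| * |(y - round x) + (x - round x)| := abs_mul _ _
      _ ≤ |x - y| * (1 + |x - y|) := by
          rw [abs_sub_comm y x]
          refine mul_le_mul_of_nonneg_left ?_ (abs_nonneg _)
          have h7 : |(y:ℝ) - round x| ≤ |x - y| + |x - round x| := by
            calc |(y:ℝ) - round x| = |(x - round x) - (x - y)| := by ring_nf
              _ ≤ |x - round x| + |x - y| := abs_sub _ _
              _ = |x - y| + |x - round x| := by ring
          calc |(y - round x) + (x - round x)| ≤ |y - (round x:ℝ)| + |(x:ℝ) - round x| := abs_add_le _ _
            _ ≤ (|x - y| + 1/2) + 1/2 := by linarith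
            _ = 1 + |x - y| := by ring
  linarith

lemma Ufun_cont : Continuous Ufun := by
  rw [continuous_iff_continuousAt]
  intro y
  rw [Metric.continuousAt_iff]
  intro ε hε
  refine ⟨min 1 ε, by positivity, fun {x} hx => ?_⟩
  rw [Real.dist_eq] at *
  have hxy : |x - y| < min 1 ε := hx
  have h1 := Ufun_lip x y
  have h2 := Ufun_lip y x
  rw [abs_sub_comm y x] at h2
  have h3 : |Ufun x - Ufun y| ≤ |x - y| * (1 + |x - y|) / 2 := abs_sub_le_iff.mpr ⟨h1, by linarith⟩
  have h4 : |x - y| < 1 := lt_of_lt_of_le hxy (min_le_left _ _)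
  have h5 : |x - y| < ε := lt_of_lt_of_le hxy (min_le_right _ _)
  nlinarith [abs_nonneg (x - y)]

lemma Ufun_per (x : ℝ) : Ufun (x + 1) = Ufun x := by
  unfold Ufun
  rw [round_add_one]
  push_cast
  ring_nf

lemma Ufun_base {y : ℝ} (h : y ∈ Ico (-(1/2) : ℝ) (1/2)) (n : ℤ) : Ufun ((n:ℝ) + y) = -y^2/2 := by
  unfold Ufun
  have : round ((n:ℝ) + y) = n := by
    rw [add_comm, round_add_intCast, round_eq_zero_iff.mpr h, zero_add]
  rw [this]
  ring_nf

lemma sub_round_mem (x : ℝ) : x - round x ∈ Ico (-(1/2):ℝ) (1/2) := by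
  rw [round_eq]
  have h1 := Int.fract_nonneg (x + 1/2)
  have h2 := Int.fract_lt_one (x + 1/2)
  rw [Int.fract] at h1 h2
  constructor <;> [linarith; linarith]

lemma u1_eq_Ufun (u₁ : ℝ → ℝ)
    (hval : ∀ x ∈ Icc (0:ℝ) (1/2), u₁ x = -x ^ 2 / 2)
    (hper : ∀ x : ℝ, u₁ (x + 1) = u₁ x)
    (heven : ∀ x : ℝ, u₁ (-x) = u₁ x) : ∀ x, u₁ x = Ufun x := by
  have hP : Function.Periodic u₁ 1 := hper
  have hint : ∀ (n : ℤ) (z : ℝ), u₁ (z + n) = u₁ z := by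
    intro n z
    have := (hP.int_mul n) (x := z)
    simpa using this
  intro x
  set n := round x with hn
  have hy := sub_round_mem x
  set y := x - round x with hy'
  have hx : x = (n:ℝ) + y := by rw [hy']; ring
  rw [hx, Ufun_base hy]
  rw [add_comm (n:ℝ) y]
  rw [hint n y]
  rcases le_or_gt 0 y with h0 | h0
  · rw [hval y ⟨h0, hy.2.le⟩]
  · have he : u₁ y = u₁ (-y) := (heven y).symm
    rw [he, hval (-y) ⟨by linarith, by linarith [hy.1]⟩]
    ring


lemma Ufun_calib (x : ℝ) : ∃ γ : ℝ → ℝ, γ 0 = x ∧ ContDiff ℝ 1 γ ∧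
    ∀ t > (0:ℝ), Ufun (γ t) - Ufun (γ 0) = ∫ s in (0:ℝ)..t, ((deriv γ s)^2/2 - Ufun (γ s)) := by
  set n := round x with hn
  set r := x - (round x : ℝ) with hr
  have hrm : r ∈ Ico (-(1/2):ℝ) (1/2) := sub_round_mem x
  set γ : ℝ → ℝ := fun t => (n:ℝ) + r * Real.exp (-t) with hγ
  have hγ0 : γ 0 = x := by simp [hγ, hr, hn]
  have hd : ∀ s : ℝ, HasDerivAt γ (-(r * Real.exp (-s))) s := by
    intro s
    have h1 : HasDerivAt (fun t : ℝ => -t) (-1) s := (hasDerivAt_id s).neg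
    have h2 : HasDerivAt (fun t : ℝ => Real.exp (-t)) (Real.exp (-s) * (-1)) s := h1.exp
    have h3 := (h2.const_mul r).const_add (n:ℝ)
    refine h3.congr_deriv ?_
    ring
  have hval : ∀ t : ℝ, 0 ≤ t → Ufun (γ t) = -(r * Real.exp (-t))^2/2 := by
    intro t ht
    have he1 : 0 < Real.exp (-t) := Real.exp_pos _
    have he2 : Real.exp (-t) ≤ 1 := Real.exp_le_one_iff.mpr (by linarith)
    have hmem : r * Real.exp (-t) ∈ Ico (-(1/2):ℝ) (1/2) := by
      constructor
      · rcases le_or_gt 0 r with h | h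
        · nlinarith [hrm.1]
        · nlinarith [hrm.1]
      · rcases le_or_gt 0 r with h | h
        · nlinarith [hrm.2]
        · nlinarith
    exact Ufun_base hmem n
  refine ⟨γ, hγ0, ?_, ?_⟩
  · exact contDiff_const.add (contDiff_const.mul (Real.contDiff_exp.comp contDiff_id.neg))
  · intro t ht
    have hcongr : EqOn (fun s => ((deriv γ s)^2/2 - Ufun (γ s))) (fun s => (r * Real.exp (-s))^2) (uIcc 0 t) := by
      intro s hs
      rw [uIcc_of_le ht.le] at hs
      simp only
      rw [(hd s).deriv, hval s hs.1]
      ring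
    rw [intervalIntegral.integral_congr hcongr]
    have hA : ∀ s : ℝ, HasDerivAt (fun s : ℝ => (-r^2/2) * Real.exp (-(2*s))) ((r * Real.exp (-s))^2) s := by
      intro s
      have h1 : HasDerivAt (fun s : ℝ => -(2*s)) (-2) s := by
        simpa using ((hasDerivAt_id s).const_mul 2).fun_neg
      have h2 := (h1.exp).const_mul (-r^2/2)
      refine h2.congr_deriv ?_
      have e1 : (r * Real.exp (-s))^2 = r^2 * Real.exp ((-s) + (-s)) := by
        rw [Real.exp_add]; ring
      rw [e1, show (-s) + (-s) = -(2*s) by ring]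
      ring
    rw [intervalIntegral.integral_eq_sub_of_hasDerivAt (fun s _ => hA s)
      (Continuous.intervalIntegrable (by continuity) 0 t)]
    have e1 : (r * Real.exp (-t))^2 = r^2 * Real.exp (-(2*t)) := by
      rw [show -(2*t) = (-t) + (-t) by ring, Real.exp_add]; ring
    rw [hval t ht.le, hval 0 le_rfl, e1]
    norm_num [Real.exp_zero]
    ring

noncomputable def Sfun (β : ℝ) (F : Finset ℤ) (x : ℝ) : ℝ :=
  ∑ k ∈ F, Real.exp (β * (-(x - (k:ℝ))^2/2))
noncomputable def Tfun (β : ℝ) (F : Finset ℤ) (x : ℝ) : ℝ :=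
  ∑ k ∈ F, (-(x - (k:ℝ))) * Real.exp (β * (-(x - (k:ℝ))^2/2))
noncomputable def psi (β : ℝ) (F : Finset ℤ) (x : ℝ) : ℝ := (1/β) * Real.log (Sfun β F x)

variable {β : ℝ} {F : Finset ℤ} {x : ℝ}

lemma Sfun_pos (hF : F.Nonempty) : 0 < Sfun β F x :=
  Finset.sum_pos (fun k _ => Real.exp_pos _) hF

lemma Sfun_cont : Continuous (Sfun β F) := by
  unfold Sfun; continuity

lemma Tfun_cont : Continuous (Tfun β F) := by
  unfold Tfun; continuity

lemma hasDerivAt_Sfun : HasDerivAt (Sfun β F) (β * Tfun β F x) x := by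
  have h : ∀ k ∈ F, HasDerivAt (fun x : ℝ => Real.exp (β * (-(x - (k:ℝ))^2/2)))
      (β * ((-(x - (k:ℝ))) * Real.exp (β * (-(x - (k:ℝ))^2/2)))) x := by
    intro k _
    have h0 : HasDerivAt (fun x : ℝ => x - (k:ℝ)) 1 x := (hasDerivAt_id x).sub_const _
    have h1 : HasDerivAt (fun x : ℝ => (x - (k:ℝ))^2) (2*(x - (k:ℝ))) x := by
      simpa using h0.fun_pow 2
    have h2 : HasDerivAt (fun x : ℝ => β * (-(x - (k:ℝ))^2/2)) (β * (-(x - (k:ℝ)))) x := by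
      have := ((h1.neg).div_const 2).const_mul β
      refine this.congr_deriv ?_
      ring
    have h3 := h2.exp
    refine h3.congr_deriv ?_
    ring
  have := HasDerivAt.fun_sum h
  refine this.congr_deriv ?_
  unfold Tfun
  rw [Finset.mul_sum]

lemma hasDerivAt_psi (hβ : 0 < β) (hF : F.Nonempty) :
    HasDerivAt (psi β F) (Tfun β F x / Sfun β F x) x := by
  have h1 := (hasDerivAt_Sfun (β := β) (F := F) (x := x)).log (Sfun_pos hF).ne'
  have h2 := h1.const_mul (1/β)
  refine h2.congr_deriv ?_
  field_simp

lemma psi_le (hβ : 0 < β) (hF : F.Nonempty) :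
    psi β F x ≤ Ufun x + Real.log (F.card) / β := by
  have hterm : ∀ k ∈ F, Real.exp (β * (-(x - (k:ℝ))^2/2)) ≤ Real.exp (β * Ufun x) := by
    intro k _
    exact Real.exp_le_exp.mpr (mul_le_mul_of_nonneg_left (Ufun_lower x k) hβ.le)
  have hS : Sfun β F x ≤ (F.card : ℝ) * Real.exp (β * Ufun x) := by
    calc Sfun β F x ≤ ∑ _k ∈ F, Real.exp (β * Ufun x) := Finset.sum_le_sum hterm
      _ = (F.card : ℝ) * Real.exp (β * Ufun x) := by
          rw [Finset.sum_const, nsmul_eq_mul]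
  have hcard : (0:ℝ) < F.card := by exact_mod_cast hF.card_pos
  have hlog : Real.log (Sfun β F x) ≤ Real.log (F.card) + β * Ufun x := by
    calc Real.log (Sfun β F x) ≤ Real.log ((F.card : ℝ) * Real.exp (β * Ufun x)) :=
          Real.log_le_log (Sfun_pos hF) hS
      _ = Real.log (F.card) + β * Ufun x := by
          rw [Real.log_mul hcard.ne' (Real.exp_pos _).ne', Real.log_exp]
  unfold psi
  calc (1/β) * Real.log (Sfun β F x) ≤ (1/β) * (Real.log (F.card) + β * Ufun x) := by
        apply mul_le_mul_of_nonneg_left hlog (by positivity)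
    _ = Ufun x + Real.log (F.card) / β := by field_simp; ring

lemma le_psi (hβ : 0 < β) (hF : F.Nonempty) (hx : round x ∈ F) : Ufun x ≤ psi β F x := by
  have hS : Real.exp (β * Ufun x) ≤ Sfun β F x := by
    have : Real.exp (β * Ufun x) = Real.exp (β * (-(x - (round x:ℝ))^2/2)) := by rfl
    rw [this]
    unfold Sfun
    exact Finset.single_le_sum (f := fun k : ℤ => Real.exp (β * (-(x - (k:ℝ))^2/2)))
      (fun k _ => (Real.exp_pos _).le) hx
  have hlog : β * Ufun x ≤ Real.log (Sfun β F x) := by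
    rw [← Real.log_exp (β * Ufun x)]
    exact Real.log_le_log (Real.exp_pos _) hS
  have := mul_le_mul_of_nonneg_left hlog (le_of_lt (by positivity : (0:ℝ) < 1/β))
  unfold psi
  calc Ufun x = (1/β) * (β * Ufun x) := by field_simp
    _ ≤ (1/β) * Real.log (Sfun β F x) := this

lemma aux_exp (hβ : 0 < β) {a U p c : ℝ} (ha : a ≤ U) (hc : 0 ≤ c) (hp : p ≤ U + c/β) :
    Real.exp (β*a) * (p - a) ≤ Real.exp (β*U) * ((1 + c)/β) := by
  have hs : 0 ≤ U - a := by linarith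
  have ht : 0 ≤ β*(U-a) := mul_nonneg hβ.le hs
  have h5 : β*(U-a) ≤ Real.exp (β*(U-a)) := by linarith [Real.add_one_le_exp (β*(U-a))]
  have h6 : Real.exp (-(β*(U-a))) * Real.exp (β*(U-a)) = 1 := by rw [← Real.exp_add]; simp
  have h7 : Real.exp (-(β*(U-a))) * (β*(U-a)) ≤ 1 := by
    calc Real.exp (-(β*(U-a))) * (β*(U-a)) ≤ Real.exp (-(β*(U-a))) * Real.exp (β*(U-a)) :=
          mul_le_mul_of_nonneg_left h5 (Real.exp_pos _).le
      _ = 1 := h6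
  have h3 : Real.exp (-(β*(U-a))) * (U - a) ≤ 1/β := by
    have heq : Real.exp (-(β*(U-a))) * (U-a) = (Real.exp (-(β*(U-a))) * (β*(U-a)))/β := by
      field_simp
    rw [heq]
    gcongr
  have h4 : Real.exp (-(β*(U-a))) ≤ 1 := Real.exp_le_one_iff.mpr (by nlinarith)
  have inner : Real.exp (-(β*(U-a))) * ((U - a) + c/β) ≤ (1+c)/β := by
    have h8 : Real.exp (-(β*(U-a))) * (c/β) ≤ c/β := by
      have : (0:ℝ) ≤ c/β := by positivity
      nlinarith
    calc Real.exp (-(β*(U-a))) * ((U - a) + c/β)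
        = Real.exp (-(β*(U-a))) * (U-a) + Real.exp (-(β*(U-a))) * (c/β) := by ring
      _ ≤ 1/β + c/β := add_le_add h3 h8
      _ = (1+c)/β := by ring
  have h2 : Real.exp (β*a) = Real.exp (β*U) * Real.exp (-(β*(U-a))) := by
    rw [← Real.exp_add]; ring_nf
  calc Real.exp (β*a) * (p - a) ≤ Real.exp (β*a) * ((U - a) + c/β) :=
        mul_le_mul_of_nonneg_left (by linarith) (Real.exp_pos _).le
    _ = Real.exp (β*U) * (Real.exp (-(β*(U-a))) * ((U - a) + c/β)) := by rw [h2]; ring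
    _ ≤ Real.exp (β*U) * ((1+c)/β) := mul_le_mul_of_nonneg_left inner (Real.exp_pos _).le

lemma exp_le_Sfun (hx : round x ∈ F) : Real.exp (β * Ufun x) ≤ Sfun β F x := by
  have : Real.exp (β * Ufun x) = Real.exp (β * (-(x - (round x:ℝ))^2/2)) := by rfl
  rw [this]
  unfold Sfun
  exact Finset.single_le_sum (f := fun k : ℤ => Real.exp (β * (-(x - (k:ℝ))^2/2)))
    (fun k _ => (Real.exp_pos _).le) hx

lemma psi_H_bound (hβ : 0 < β) (hF : F.Nonempty) (hx : round x ∈ F) :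
    psi β F x + (Tfun β F x / Sfun β F x)^2/2 ≤ (F.card : ℝ) * (1 + Real.log (F.card)) / β := by
  have hN1 : (1:ℝ) ≤ (F.card : ℝ) := by exact_mod_cast hF.card_pos
  have hlogN : 0 ≤ Real.log (F.card) := Real.log_nonneg hN1
  have hS : 0 < Sfun β F x := Sfun_pos hF
  set Q : ℝ := ∑ k ∈ F, (x - (k:ℝ))^2 * Real.exp (β * (-(x - (k:ℝ))^2/2)) with hQ
  have hQ0 : 0 ≤ Q := Finset.sum_nonneg (fun k _ => by positivity)
  -- Cauchy-Schwarz
  have hCS : (Tfun β F x)^2 ≤ Q * Sfun β F x := by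
    have hcs := Finset.sum_mul_sq_le_sq_mul_sq F
      (fun k => (-(x - (k:ℝ))) * Real.sqrt (Real.exp (β * (-(x - (k:ℝ))^2/2))))
      (fun k => Real.sqrt (Real.exp (β * (-(x - (k:ℝ))^2/2))))
    have e1 : ∀ k : ℤ, ((-(x - (k:ℝ))) * Real.sqrt (Real.exp (β * (-(x - (k:ℝ))^2/2)))) *
        Real.sqrt (Real.exp (β * (-(x - (k:ℝ))^2/2)))
        = (-(x - (k:ℝ))) * Real.exp (β * (-(x - (k:ℝ))^2/2)) := by
      intro k
      rw [mul_assoc, Real.mul_self_sqrt (Real.exp_pos _).le]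
    have e2 : ∀ k : ℤ, ((-(x - (k:ℝ))) * Real.sqrt (Real.exp (β * (-(x - (k:ℝ))^2/2))))^2
        = (x - (k:ℝ))^2 * Real.exp (β * (-(x - (k:ℝ))^2/2)) := by
      intro k
      rw [mul_pow, Real.sq_sqrt (Real.exp_pos _).le]
      ring
    have e3 : ∀ k : ℤ, (Real.sqrt (Real.exp (β * (-(x - (k:ℝ))^2/2))))^2
        = Real.exp (β * (-(x - (k:ℝ))^2/2)) := fun k => Real.sq_sqrt (Real.exp_pos _).le
    calc (Tfun β F x)^2
        = (∑ k ∈ F, ((-(x - (k:ℝ))) * Real.sqrt (Real.exp (β * (-(x - (k:ℝ))^2/2)))) *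
            Real.sqrt (Real.exp (β * (-(x - (k:ℝ))^2/2))))^2 := by
          unfold Tfun; congr 1; exact Finset.sum_congr rfl (fun k _ => (e1 k).symm)
      _ ≤ (∑ k ∈ F, ((-(x - (k:ℝ))) * Real.sqrt (Real.exp (β * (-(x - (k:ℝ))^2/2))))^2) *
          (∑ k ∈ F, (Real.sqrt (Real.exp (β * (-(x - (k:ℝ))^2/2))))^2) := hcs
      _ = Q * Sfun β F x := by
          unfold Sfun
          rw [hQ]
          congr 1
          · exact Finset.sum_congr rfl (fun k _ => e2 k)
          · exact Finset.sum_congr rfl (fun k _ => e3 k)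
  -- per-term bound
  have hkey : ∀ k ∈ F, Real.exp (β * (-(x - (k:ℝ))^2/2)) * psi β F x
      + (x - (k:ℝ))^2 * Real.exp (β * (-(x - (k:ℝ))^2/2)) / 2
      ≤ Real.exp (β * Ufun x) * ((1 + Real.log (F.card))/β) := by
    intro k _
    have := aux_exp hβ (Ufun_lower x k) hlogN (psi_le hβ hF)
    calc Real.exp (β * (-(x - (k:ℝ))^2/2)) * psi β F x
        + (x - (k:ℝ))^2 * Real.exp (β * (-(x - (k:ℝ))^2/2)) / 2
        = Real.exp (β * (-(x - (k:ℝ))^2/2)) * (psi β F x - (-(x - (k:ℝ))^2/2)) := by ring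
      _ ≤ _ := this
  -- sum
  have hsum : Sfun β F x * psi β F x + Q/2
      ≤ (F.card : ℝ) * (Real.exp (β * Ufun x) * ((1 + Real.log (F.card))/β)) := by
    have h1 : Sfun β F x * psi β F x + Q/2
        = ∑ k ∈ F, (Real.exp (β * (-(x - (k:ℝ))^2/2)) * psi β F x
          + (x - (k:ℝ))^2 * Real.exp (β * (-(x - (k:ℝ))^2/2)) / 2) := by
      rw [Finset.sum_add_distrib, ← Finset.sum_mul, ← Finset.sum_div]
      rfl
    rw [h1]
    calc _ ≤ ∑ _k ∈ F, Real.exp (β * Ufun x) * ((1 + Real.log (F.card))/β) :=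
          Finset.sum_le_sum hkey
      _ = (F.card : ℝ) * (Real.exp (β * Ufun x) * ((1 + Real.log (F.card))/β)) := by
          rw [Finset.sum_const, nsmul_eq_mul]
  have hSx := exp_le_Sfun (β := β) hx
  have hTS : (Tfun β F x / Sfun β F x)^2/2 ≤ Q/(2*Sfun β F x) := by
    rw [div_pow, div_div, div_le_div_iff₀ (by positivity) (by positivity)]
    nlinarith
  have hfinal : psi β F x + Q/(2*Sfun β F x) ≤ (F.card : ℝ) * (1 + Real.log (F.card)) / β := by
    have heq : psi β F x + Q/(2*Sfun β F x) = (Sfun β F x * psi β F x + Q/2)/Sfun β F x := by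
      field_simp
    rw [heq, div_le_iff₀ hS]
    calc Sfun β F x * psi β F x + Q/2
        ≤ (F.card : ℝ) * (Real.exp (β * Ufun x) * ((1 + Real.log (F.card))/β)) := hsum
      _ ≤ (F.card : ℝ) * (Sfun β F x * ((1 + Real.log (F.card))/β)) := by
          apply mul_le_mul_of_nonneg_left _ (by positivity)
          apply mul_le_mul_of_nonneg_right hSx (by positivity)
      _ = (F.card : ℝ) * (1 + Real.log (F.card)) / β * Sfun β F x := by ring
  linarith

lemma Ufun_dom (γ : ℝ → ℝ) (t₁ t₂ : ℝ) (h12 : t₁ < t₂) (hγ : ContDiffOn ℝ 1 γ (Icc t₁ t₂)) :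
    Ufun (γ t₂) - Ufun (γ t₁) ≤ ∫ s in t₁..t₂, ((deriv γ s)^2/2 - Ufun (γ s)) := by
  have hγc : ContinuousOn γ (Icc t₁ t₂) := hγ.continuousOn
  set g := derivWithin γ (Icc t₁ t₂) with hg
  have hgc : ContinuousOn g (Icc t₁ t₂) :=
    hγ.continuousOn_derivWithin (uniqueDiffOn_Icc h12) le_rfl
  have hder : ∀ s ∈ Ioo t₁ t₂, HasDerivAt γ (g s) s := by
    intro s hs
    have hmem : Icc t₁ t₂ ∈ nhds s := Icc_mem_nhds hs.1 hs.2
    exact ((hγ.differentiableOn one_ne_zero s (Ioo_subset_Icc_self hs)).hasDerivWithinAt).hasDerivAt hmem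
  set φ : ℝ → ℝ := fun s => (g s)^2/2 - Ufun (γ s) with hφ
  have hφc : ContinuousOn φ (Icc t₁ t₂) :=
    ((hgc.pow 2).div_const 2).sub (Ufun_cont.comp_continuousOn hγc)
  have hφi : IntervalIntegrable φ MeasureTheory.volume t₁ t₂ :=
    hφc.intervalIntegrable_of_Icc h12.le
  -- replace deriv by derivWithin in the integral
  have hcong : (∫ s in t₁..t₂, ((deriv γ s)^2/2 - Ufun (γ s))) = ∫ s in t₁..t₂, φ s := by
    apply intervalIntegral.integral_congr_ae
    have h2 : ∀ᵐ s : ℝ, s ≠ t₂ := by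
      rw [MeasureTheory.ae_iff]
      have : {s : ℝ | ¬ s ≠ t₂} = {t₂} := by ext s; simp
      rw [this]
      exact Real.volume_singleton
    filter_upwards [h2] with s hs hmem
    rw [uIoc_of_le h12.le] at hmem
    have hIoo : s ∈ Ioo t₁ t₂ := ⟨hmem.1, lt_of_le_of_ne hmem.2 hs⟩
    have hds : deriv γ s = g s := (hder s hIoo).deriv
    simp only [hφ, hds]
  rw [hcong]
  -- compact range and finset of integers
  obtain ⟨C, hC⟩ := isCompact_Icc.exists_bound_of_continuousOn hγc
  have hC0 : 0 ≤ C := le_trans (norm_nonneg _) (hC t₁ (left_mem_Icc.mpr h12.le))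
  set F : Finset ℤ := Finset.Icc (-(⌈C⌉+1)) (⌈C⌉+1) with hFdef
  have h0F : (0:ℤ) ∈ F := by
    rw [hFdef, Finset.mem_Icc]
    have : (0:ℤ) ≤ ⌈C⌉ := Int.ceil_nonneg hC0
    omega
  have hFne : F.Nonempty := ⟨0, h0F⟩
  have hround : ∀ s, s ∈ Icc t₁ t₂ → round (γ s) ∈ F := by
    intro s hs
    have h1 : |γ s| ≤ C := by simpa [Real.norm_eq_abs] using hC s hs
    have h2 : |γ s - round (γ s)| ≤ 1/2 := abs_sub_round (γ s)
    have h3 : |(round (γ s) : ℝ)| ≤ C + 1 := by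
      calc |(round (γ s) : ℝ)| = |γ s - (γ s - round (γ s))| := by ring_nf
        _ ≤ |γ s| + |γ s - round (γ s)| := abs_sub _ _
        _ ≤ C + 1 := by linarith
    have h4 : |(round (γ s) : ℝ)| ≤ ((⌈C⌉+1 : ℤ) : ℝ) := by
      push_cast
      linarith [Int.le_ceil C]
    have h5 : |round (γ s)| ≤ ⌈C⌉+1 := by exact_mod_cast h4
    have h6 := abs_le.mp h5
    rw [hFdef, Finset.mem_Icc]
    omega
  set N : ℝ := (F.card : ℝ) with hN
  have hN1 : (1:ℝ) ≤ N := by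
    have h : 1 ≤ F.card := hFne.card_pos
    rw [hN]
    exact_mod_cast h
  have hlogN : 0 ≤ Real.log N := Real.log_nonneg hN1
  set K : ℝ := N*(1+Real.log N)*(t₂-t₁) + Real.log N with hK
  have hK0 : 0 ≤ K := by
    have : 0 ≤ t₂ - t₁ := by linarith
    positivity
  -- key estimate for every β > 0
  have key : ∀ β : ℝ, 0 < β →
      Ufun (γ t₂) - Ufun (γ t₁) ≤ (∫ s in t₁..t₂, φ s) + K/β := by
    intro β hβ
    have hψd : ∀ y : ℝ, HasDerivAt (psi β F) (Tfun β F y / Sfun β F y) y :=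
      fun y => hasDerivAt_psi hβ hFne
    have hψcont : Continuous (psi β F) :=
      continuous_iff_continuousAt.mpr (fun y => (hψd y).continuousAt)
    have hψγc : ContinuousOn (fun s => psi β F (γ s)) (Icc t₁ t₂) :=
      hψcont.comp_continuousOn hγc
    set a : ℝ → ℝ := fun s => Tfun β F (γ s) / Sfun β F (γ s) with ha
    have hac : ContinuousOn (fun s => a s * g s) (Icc t₁ t₂) := by
      apply ContinuousOn.mul _ hgc
      apply ContinuousOn.div (Tfun_cont.comp_continuousOn hγc) (Sfun_cont.comp_continuousOn hγc)
      exact fun s _ => (Sfun_pos hFne).ne'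
    have hinta : IntervalIntegrable (fun s => a s * g s) MeasureTheory.volume t₁ t₂ :=
      hac.intervalIntegrable_of_Icc h12.le
    have hcomp : ∀ s ∈ Ioo t₁ t₂, HasDerivAt (fun s => psi β F (γ s)) (a s * g s) s :=
      fun s hs => (hψd (γ s)).comp s (hder s hs)
    have hFTC : (∫ s in t₁..t₂, a s * g s) = psi β F (γ t₂) - psi β F (γ t₁) :=
      intervalIntegral.integral_eq_sub_of_hasDerivAt_of_le h12.le hψγc hcomp hinta
    set ε : ℝ := N * (1 + Real.log N) / β with hε
    have hpt : ∀ s ∈ Icc t₁ t₂, a s * g s ≤ φ s + ε := by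
      intro s hs
      have h1 : a s * g s ≤ (a s)^2/2 + (g s)^2/2 := by nlinarith [sq_nonneg (a s - g s)]
      have h2 : psi β F (γ s) + (a s)^2/2 ≤ ε := psi_H_bound hβ hFne (hround s hs)
      have h3 : Ufun (γ s) ≤ psi β F (γ s) := le_psi hβ hFne (hround s hs)
      simp only [hφ]
      linarith
    have hmono : (∫ s in t₁..t₂, a s * g s) ≤ ∫ s in t₁..t₂, (φ s + ε) :=
      intervalIntegral.integral_mono_on h12.le hinta
        (hφi.add (intervalIntegrable_const)) hpt
    have hadd : (∫ s in t₁..t₂, (φ s + ε)) = (∫ s in t₁..t₂, φ s) + ε*(t₂-t₁) := by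
      rw [intervalIntegral.integral_add hφi intervalIntegrable_const,
        intervalIntegral.integral_const, smul_eq_mul]
      ring
    have hb2 : Ufun (γ t₂) ≤ psi β F (γ t₂) :=
      le_psi hβ hFne (hround t₂ (right_mem_Icc.mpr h12.le))
    have hb1 : psi β F (γ t₁) ≤ Ufun (γ t₁) + Real.log N / β := psi_le hβ hFne
    have hKb : ε*(t₂-t₁) + Real.log N / β = K/β := by
      rw [hε, hK]
      field_simp
    calc Ufun (γ t₂) - Ufun (γ t₁)
        ≤ psi β F (γ t₂) - psi β F (γ t₁) + Real.log N / β := by linarith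
      _ = (∫ s in t₁..t₂, a s * g s) + Real.log N / β := by rw [hFTC]
      _ ≤ (∫ s in t₁..t₂, φ s) + ε*(t₂-t₁) + Real.log N / β := by
          rw [hadd] at hmono; linarith
      _ = (∫ s in t₁..t₂, φ s) + K/β := by rw [← hKb]; ring
  -- conclude by letting β → ∞
  refine le_of_forall_pos_le_add fun ε' hε' => ?_
  have hK1 : (0:ℝ) < K+1 := by linarith
  have hβpos : 0 < (K+1)/ε' := div_pos hK1 hε'
  have := key ((K+1)/ε') hβpos
  have hfrac : K/((K+1)/ε') ≤ ε' := by
    rw [div_div_eq_mul_div, div_le_iff₀ hK1]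
    nlinarith
  linarith


theorem stmt_8
    (u₁ : ℝ → ℝ)
    (hval : ∀ x ∈ Icc (0:ℝ) (1/2), u₁ x = -x ^ 2 / 2)
    (hper : ∀ x : ℝ, u₁ (x + 1) = u₁ x)
    (heven : ∀ x : ℝ, u₁ (-x) = u₁ x) :
    IsForwardWeakKAMCircle u₁ ∧ IsForwardWeakKAMCircle (fun _ => 0) ∧
      u₁ ≠ fun _ => 0 := by
  have hU' : u₁ = Ufun := funext (u1_eq_Ufun u₁ hval hper heven)
  have hne : u₁ ≠ fun _ => 0 := by
    intro h
    have h1 : u₁ (1/2) = -(1/2:ℝ) ^ 2 / 2 := hval (1/2) ⟨by norm_num, le_rfl⟩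
    rw [h] at h1
    norm_num at h1
  refine ⟨?_, ?_, hne⟩
  · rw [hU']
    exact ⟨Ufun_cont, Ufun_per, Ufun_dom, Ufun_calib⟩
  · refine ⟨continuous_const, fun _ => rfl, ?_, ?_⟩
    · intro γ t₁ t₂ h12 _
      have h0 : (0:ℝ) ≤ ∫ s in t₁..t₂, ((deriv γ s) ^ 2 / 2 - (fun _ : ℝ => (0:ℝ)) (γ s)) := by
        apply intervalIntegral.integral_nonneg h12.le
        intro u _
        simp only [sub_zero]
        positivity
      simpa using h0
    · intro x
      refine ⟨fun _ => x, rfl, contDiff_const, fun t ht => ?_⟩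
      simp [deriv_const']
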